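/- Let A be an abelian category and T ∈ A with R = End_A(T)^op. The functor Hom_A(T,-) restricts to a fully faithful functor from App(T) to R-mod, where App(T) consists of objects M with an exact sequence T_1 → T_0 → M → 0 in which T_i ∈ add T, T_0 → M is a T-precover, and the induced map T_1 → Ker(T_0 → M) is a T-precover. -/

import Mathlib

open CategoryTheory CategoryTheory.Limits Opposite ZeroObject

universe v u

variable {A : Type u} [Category.{v} A] [Abelian A]

/-- the `n`-fold direct sum `T ⊕ ⋯ ⊕ T`. -/
noncomputable def npow (T : A) : ℕ → A
  | 0 => 0
  | n + 1 => T ⊞ npow T n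

/-- membership in `add T`: direct summands of finite direct sums of copies of `T`. -/
def InAddT (T : A) (P : A) : Prop :=
  ∃ (n : ℕ) (Q : A), Nonempty ((P ⊞ Q) ≅ npow T n)

/-- `App(T)`: objects `M` with an exact presentation `T₁ → T₀ → M → 0` where
`T₀ → M` is a `T`-precover and the induced map `T₁ → Ker(T₀ → M)` is a
`T`-precover. -/
def InApp (T : A) (M : A) : Prop :=
  ∃ (T₁ T₀ : A) (_ : InAddT T T₁) (_ : InAddT T T₀)
    (f₁ : T₁ ⟶ T₀) (f₀ : T₀ ⟶ M) (hw : f₁ ≫ f₀ = 0),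
      Epi f₀ ∧ (ShortComplex.mk f₁ f₀ hw).Exact ∧
      (∀ g : T ⟶ M, ∃ h : T ⟶ T₀, h ≫ f₀ = g) ∧
      (∀ g : T ⟶ kernel f₀, ∃ h : T ⟶ T₁, h ≫ kernel.lift f₀ f₁ hw = g)

namespace AppAux

noncomputable abbrev FF (T : A) : A ⥤ ModuleCat.{v} (End T)ᵐᵒᵖ := preadditiveCoyonedaObj T

lemma smul_def (T : A) {M : A} (r : (End T)ᵐᵒᵖ) (g : (FF T).obj M) : r • g = r.unop ≫ g := rfl

lemma map_app (T : A) {M N : A} (f : M ⟶ N) (g : (FF T).obj M) :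
    ((FF T).map f) g = (g : T ⟶ M) ≫ f := rfl

/-- `R ≃ₗ[R] Hom(T,T)` -/
noncomputable def eRT (T : A) : (End T)ᵐᵒᵖ ≃ₗ[(End T)ᵐᵒᵖ] (FF T).obj T where
  toFun r := r.unop
  invFun x := (MulOpposite.op (x : T ⟶ T) : (End T)ᵐᵒᵖ)
  map_add' _ _ := rfl
  map_smul' _ _ := rfl
  left_inv _ := rfl
  right_inv _ := rfl

/-- `Hom(T, X ⊞ Y) ≃ₗ Hom(T,X) × Hom(T,Y)` -/
noncomputable def eBiprod (T X Y : A) :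
    ((FF T).obj (X ⊞ Y)) ≃ₗ[(End T)ᵐᵒᵖ] ((FF T).obj X × (FF T).obj Y) where
  toFun g := (((g : T ⟶ X ⊞ Y) ≫ biprod.fst : T ⟶ X), ((g : T ⟶ X ⊞ Y) ≫ biprod.snd : T ⟶ Y))
  invFun p := ((p.1 : T ⟶ X) ≫ biprod.inl + (p.2 : T ⟶ Y) ≫ biprod.inr : T ⟶ X ⊞ Y)
  map_add' g h :=
    Prod.ext (Preadditive.add_comp _ _ _ _ _ _) (Preadditive.add_comp _ _ _ _ _ _)
  map_smul' r g := Prod.ext (Category.assoc _ _ _) (Category.assoc _ _ _)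
  left_inv g := by
    dsimp
    change T ⟶ X ⊞ Y at g
    rw [Category.assoc, Category.assoc, ← Preadditive.comp_add, biprod.total, Category.comp_id]
  right_inv p := by
    obtain ⟨p₁, p₂⟩ := p
    change T ⟶ X at p₁
    change T ⟶ Y at p₂
    dsimp
    exact Prod.ext (by simp; rfl) (by simp; rfl)

lemma subsingleton_zero (T : A) : Subsingleton ((FF T).obj (npow T 0)) := by
  show Subsingleton (T ⟶ (0 : A))
  infer_instance

lemma free_npow (T : A) : ∀ n, Module.Free ((End T)ᵐᵒᵖ) ((FF T).obj (npow T n))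
  | 0 => by
      haveI := subsingleton_zero T
      exact Module.Free.of_subsingleton _ _
  | n + 1 => by
      haveI := free_npow T n
      haveI : Module.Free ((End T)ᵐᵒᵖ) ((FF T).obj T) := Module.Free.of_equiv (eRT T)
      exact Module.Free.of_equiv (eBiprod T T (npow T n)).symm

lemma finite_npow (T : A) : ∀ n, Module.Finite ((End T)ᵐᵒᵖ) ((FF T).obj (npow T n))
  | 0 => by
      haveI := subsingleton_zero T
      exact Module.Finite.of_surjective
        (0 : (End T)ᵐᵒᵖ →ₗ[(End T)ᵐᵒᵖ] ((FF T).obj (npow T 0)))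
        (fun x => ⟨0, Subsingleton.elim _ _⟩)
  | n + 1 => by
      haveI := finite_npow T n
      haveI : Module.Finite ((End T)ᵐᵒᵖ) ((FF T).obj T) := Module.Finite.equiv (eRT T)
      exact Module.Finite.equiv (eBiprod T T (npow T n)).symm

lemma proj_finite_of_inAddT (T P : A) (h : InAddT T P) :
    Module.Projective ((End T)ᵐᵒᵖ) ((FF T).obj P) ∧
      Module.Finite ((End T)ᵐᵒᵖ) ((FF T).obj P) := by
  obtain ⟨n, Q, ⟨e⟩⟩ := h
  haveI := free_npow T n
  haveI := finite_npow T n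
  let i : ((FF T).obj P) →ₗ[(End T)ᵐᵒᵖ] ((FF T).obj (npow T n)) :=
    ((FF T).map (biprod.inl ≫ e.hom)).hom
  let s : ((FF T).obj (npow T n)) →ₗ[(End T)ᵐᵒᵖ] ((FF T).obj P) :=
    ((FF T).map (e.inv ≫ biprod.fst)).hom
  have hsi : s.comp i = LinearMap.id := by
    apply LinearMap.ext
    intro x
    show (x ≫ (biprod.inl ≫ e.hom)) ≫ (e.inv ≫ biprod.fst) = x
    change T ⟶ P at x
    simp
  refine ⟨Module.Projective.of_split i s hsi, Module.Finite.of_surjective s ?_⟩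
  intro x
  exact ⟨i x, by rw [← LinearMap.comp_apply, hsi]; rfl⟩

lemma bij_T (T N : A) : Function.Bijective (fun f : T ⟶ N => (FF T).map f) := by
  constructor
  · intro f f' h
    have h2 := congrArg (fun ψ : ((FF T).obj T ⟶ (FF T).obj N) => ψ (𝟙 T)) h
    simpa using (show 𝟙 T ≫ f = 𝟙 T ≫ f' from h2)
  · intro φ
    refine ⟨φ (𝟙 T), ?_⟩
    apply ModuleCat.hom_ext
    apply LinearMap.ext
    intro g
    change T ⟶ T at g
    have h1 := φ.hom.map_smul (MulOpposite.op (show T ⟶ T from g) : (End T)ᵐᵒᵖ)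
      (𝟙 T : (FF T).obj T)
    have h2 : φ.hom g = φ.hom (g ≫ 𝟙 T) := congrArg φ.hom (Category.comp_id g).symm
    show (g : T ⟶ T) ≫ φ (𝟙 T) = φ g
    exact (h2.trans h1).symm

lemma bij_npow (T N : A) : ∀ n, Function.Bijective (fun f : npow T n ⟶ N => (FF T).map f)
  | 0 => by
      constructor
      · intro f f' _
        exact (Subsingleton.elim (α := (0 : A) ⟶ N) f f')
      · intro φ
        refine ⟨0, ?_⟩
        apply ModuleCat.hom_ext
        apply LinearMap.ext
        intro x
        haveI := subsingleton_zero T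
        have hx : x = 0 := Subsingleton.elim _ _
        rw [hx, map_zero, map_zero]
  | n + 1 => by
      have ih := bij_npow T N n
      have hT := bij_T T N
      constructor
      · intro f f' h
        apply biprod.hom_ext'
        · apply hT.1
          show (FF T).map (biprod.inl ≫ f) = (FF T).map (biprod.inl ≫ f')
          rw [(FF T).map_comp biprod.inl f, (FF T).map_comp biprod.inl f']
          exact congrArg _ h
        · apply ih.1
          show (FF T).map (biprod.inr ≫ f) = (FF T).map (biprod.inr ≫ f')
          rw [(FF T).map_comp biprod.inr f, (FF T).map_comp biprod.inr f']
          exact congrArg _ h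
      · intro φ
        obtain ⟨fL, hL⟩ := hT.2 ((FF T).map biprod.inl ≫ φ)
        obtain ⟨fR, hR⟩ := ih.2 ((FF T).map biprod.inr ≫ φ)
        refine ⟨biprod.desc fL fR, ?_⟩
        apply ModuleCat.hom_ext
        apply LinearMap.ext
        intro g0
        let g : T ⟶ T ⊞ npow T n := g0
        have e1 : φ ((g ≫ biprod.fst) ≫ biprod.inl) = (g ≫ biprod.fst) ≫ fL :=
          (congrArg (fun ψ : ((FF T).obj T ⟶ (FF T).obj N) =>
            ψ (g ≫ biprod.fst)) hL).symm
        have e2 : φ ((g ≫ biprod.snd) ≫ biprod.inr) = (g ≫ biprod.snd) ≫ fR :=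
          (congrArg (fun ψ : ((FF T).obj (npow T n) ⟶ (FF T).obj N) =>
            ψ (g ≫ biprod.snd)) hR).symm
        have hg : g = (g ≫ biprod.fst) ≫ biprod.inl + (g ≫ biprod.snd) ≫ biprod.inr := by
          rw [Category.assoc, Category.assoc, ← Preadditive.comp_add, biprod.total]
          exact (Category.comp_id _).symm
        show g ≫ biprod.desc fL fR = φ g
        conv_lhs => rw [hg]
        conv_rhs => rw [hg]
        erw [map_add (ConcreteCategory.hom φ), e1, e2]
        simp [Preadditive.add_comp]
        rfl

lemma bij_addT (T P : A) (h : InAddT T P) (N : A) :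
    Function.Bijective (fun f : P ⟶ N => (FF T).map f) := by
  obtain ⟨n, Q, ⟨e⟩⟩ := h
  have hb := bij_npow T N n
  constructor
  · intro f f' hf
    have h2 : (e.inv ≫ biprod.fst) ≫ f = (e.inv ≫ biprod.fst) ≫ f' := by
      apply hb.1
      show (FF T).map ((e.inv ≫ biprod.fst) ≫ f) = (FF T).map ((e.inv ≫ biprod.fst) ≫ f')
      rw [(FF T).map_comp (e.inv ≫ biprod.fst) f, (FF T).map_comp (e.inv ≫ biprod.fst) f']
      exact congrArg (fun ψ => (FF T).map (e.inv ≫ biprod.fst) ≫ ψ) hf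
    have h3 := congrArg (fun u => (biprod.inl ≫ e.hom) ≫ u) h2
    simpa using h3
  · intro φ
    obtain ⟨g, hg⟩ := hb.2 ((FF T).map (e.inv ≫ biprod.fst) ≫ φ)
    have hg' : (FF T).map g = (FF T).map (e.inv ≫ biprod.fst) ≫ φ := hg
    refine ⟨(biprod.inl ≫ e.hom) ≫ g, ?_⟩
    show (FF T).map ((biprod.inl ≫ e.hom) ≫ g) = φ
    rw [(FF T).map_comp (biprod.inl ≫ e.hom) g, hg', ← Category.assoc,
      ← (FF T).map_comp (biprod.inl ≫ e.hom) (e.inv ≫ biprod.fst)]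
    have h5 : (biprod.inl ≫ e.hom) ≫ (e.inv ≫ biprod.fst) = 𝟙 P := by simp
    rw [h5, (FF T).map_id P, Category.id_comp]

end AppAux

open AppAux

/-- for `T ∈ A` and `R = End_A(T)^op`, the functor `Hom_A(T,-)`
restricts to a fully faithful functor `App(T) → R-mod`: it takes values in
finitely presented `R`-modules and is bijective on Hom-sets between objects of
`App(T)`. -/
theorem hom_functor_fullyFaithful_on_App (T : A) :
    (∀ M : A, InApp T M →
      Module.FinitePresentation (End T)ᵐᵒᵖ ((preadditiveCoyonedaObj T).obj M)) ∧
    (∀ M N : A, InApp T M → InApp T N →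
      Function.Bijective
        (fun f : M ⟶ N => (preadditiveCoyonedaObj T).map f)) := by
  constructor
  · rintro M ⟨T₁, T₀, h₁, h₀, f₁, f₀, hw, hepi, hex, hpre₀, hpre₁⟩
    haveI := (proj_finite_of_inAddT T T₀ h₀).1
    haveI := (proj_finite_of_inAddT T T₀ h₀).2
    haveI := (proj_finite_of_inAddT T T₁ h₁).2
    haveI : Module.FinitePresentation ((End T)ᵐᵒᵖ) ((FF T).obj T₀) :=
      Module.finitePresentation_of_projective ((End T)ᵐᵒᵖ) ((FF T).obj T₀ : Type v)
    have hsurj : Function.Surjective ((FF T).map f₀) := by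
      intro g
      obtain ⟨h, hh⟩ := hpre₀ g
      exact ⟨h, hh⟩
    have hker : LinearMap.ker (((FF T).map f₀).hom : (FF T).obj T₀ →ₗ[(End T)ᵐᵒᵖ] (FF T).obj M)
        = LinearMap.range (((FF T).map f₁).hom : (FF T).obj T₁ →ₗ[(End T)ᵐᵒᵖ] (FF T).obj T₀) := by
      ext g
      rw [LinearMap.mem_ker, LinearMap.mem_range]
      constructor
      · intro hg
        change T ⟶ T₀ at g
        have hg0 : (g : T ⟶ T₀) ≫ f₀ = 0 := hg
        obtain ⟨h, hh⟩ := hpre₁ (kernel.lift f₀ g hg0)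
        refine ⟨h, ?_⟩
        show (h : T ⟶ T₁) ≫ f₁ = g
        have h6 : (h : T ⟶ T₁) ≫ kernel.lift f₀ f₁ hw ≫ kernel.ι f₀ = g := by
          rw [← Category.assoc, hh, kernel.lift_ι]
        rw [kernel.lift_ι] at h6
        exact h6
      · rintro ⟨h, rfl⟩
        change T ⟶ T₁ at h
        show ((h : T ⟶ T₁) ≫ f₁) ≫ f₀ = 0
        rw [Category.assoc, hw, Limits.comp_zero]
    have hfg : (LinearMap.ker (((FF T).map f₀).hom :
        (FF T).obj T₀ →ₗ[(End T)ᵐᵒᵖ] (FF T).obj M)).FG := by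
      have hrange : LinearMap.range (((FF T).map f₁).hom :
            (FF T).obj T₁ →ₗ[(End T)ᵐᵒᵖ] (FF T).obj T₀)
          = Submodule.map (((FF T).map f₁).hom :
            (FF T).obj T₁ →ₗ[(End T)ᵐᵒᵖ] (FF T).obj T₀) ⊤ :=
        (Submodule.map_top _).symm
      have htop : (⊤ : Submodule ((End T)ᵐᵒᵖ) ((FF T).obj T₁)).FG := Module.Finite.fg_top
      rw [hker, hrange]
      exact Submodule.FG.map
        (f := (((FF T).map f₁).hom : (FF T).obj T₁ →ₗ[(End T)ᵐᵒᵖ] (FF T).obj T₀)) htop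
    exact Module.finitePresentation_of_surjective ((FF T).map f₀).hom hsurj hfg
  · rintro M N ⟨T₁, T₀, h₁, h₀, f₁, f₀, hw, hepi, hex, hpre₀, hpre₁⟩ _
    haveI : Epi f₀ := hepi
    constructor
    · intro f f' h
      have h2 : f₀ ≫ f = f₀ ≫ f' := by
        apply (bij_addT T T₀ h₀ N).1
        show (FF T).map (f₀ ≫ f) = (FF T).map (f₀ ≫ f')
        rw [Functor.map_comp, Functor.map_comp]
        exact congrArg _ h
      exact (cancel_epi f₀).mp h2
    · intro φ
      obtain ⟨u, hu⟩ := (bij_addT T T₀ h₀ N).2 ((FF T).map f₀ ≫ φ)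
      have hu' : (FF T).map u = (FF T).map f₀ ≫ φ := hu
      have hu0 : f₁ ≫ u = 0 := by
        apply (bij_addT T T₁ h₁ N).1
        show (FF T).map (f₁ ≫ u) = (FF T).map (0 : T₁ ⟶ N)
        rw [(FF T).map_comp f₁ u, hu', ← Category.assoc, ← (FF T).map_comp f₁ f₀, hw]
        apply ModuleCat.hom_ext
        apply LinearMap.ext
        intro x
        show φ ((x : T ⟶ T₁) ≫ (0 : T₁ ⟶ M)) = (x : T ⟶ T₁) ≫ (0 : T₁ ⟶ N)
        change T ⟶ T₁ at x
        rw [Limits.comp_zero, Limits.comp_zero]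
        exact map_zero (ConcreteCategory.hom φ)
      haveI : Epi (ShortComplex.mk f₁ f₀ hw).g := hepi
      obtain ⟨l, hl⟩ := hex.desc' u hu0
      refine ⟨l, ?_⟩
      apply ModuleCat.hom_ext
      apply LinearMap.ext
      intro g
      obtain ⟨h, hh⟩ := hpre₀ g
      show (g : T ⟶ M) ≫ l = φ g
      have e1 : φ ((h : T ⟶ T₀) ≫ f₀) = (h : T ⟶ T₀) ≫ u :=
        (congrArg (fun ψ : ((FF T).obj T₀ ⟶ (FF T).obj N) => ψ h) hu').symm
      rw [← hh, Category.assoc, hl, e1]
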